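/- A graphical degree sequence d = (d_1 ≥ d_2 ≥ ⋯ ≥ d_n) is potentially bipartite if and only if the terms of d can be partitioned into two nonincreasing subsequences a and b with equal weights |a| = |b| = |d|/2 such that the conjugate of a dominates b. -/

import Mathlib

open Finset
set_option maxHeartbeats 1600000

variable {m k n : ℕ}

def pbcol (f : Fin m → Finset (Fin k)) (c : Fin k) : ℕ :=
  (Finset.univ.filter (fun t => c ∈ f t)).card

def pbP {k : ℕ} (g : Fin k → ℕ) (j : ℕ) : ℕ :=
  ∑ i ∈ Finset.univ.filter (fun i : Fin k => (i : ℕ) < j), g i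

lemma pbcol_sum (f : Fin m → Finset (Fin k)) (c : Fin k) :
    pbcol f c = ∑ t, if c ∈ f t then 1 else 0 := by
  rw [pbcol, Finset.card_filter]

lemma filter_lt_card {k : ℕ} (x : ℕ) (hx : x ≤ k) :
    ((Finset.univ : Finset (Fin k)).filter fun c : Fin k => (c : ℕ) < x).card = x := by
  have hmem : ∀ y ∈ Finset.range x, y < k := fun y hy =>
    lt_of_lt_of_le (Finset.mem_range.mp hy) hx
  have : (Finset.univ : Finset (Fin k)).filter (fun c : Fin k => (c : ℕ) < x)
      = (Finset.range x).attachFin hmem := by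
    ext c
    simp [Finset.mem_attachFin]
  rw [this, Finset.card_attachFin, Finset.card_range]

lemma filter_lt_card_le {k : ℕ} (j : ℕ) :
    ((Finset.univ : Finset (Fin k)).filter fun c : Fin k => (c : ℕ) < j).card ≤ j := by
  have := Finset.card_le_card_of_injOn
    (s := (Finset.univ : Finset (Fin k)).filter fun c : Fin k => (c : ℕ) < j)
    (t := Finset.range j) (fun c : Fin k => (c : ℕ))
    (fun c hc => Finset.mem_range.mpr (Finset.mem_filter.mp hc).2)
    (fun c _ c' _ h => Fin.ext h)
  simpa [Finset.card_range] using this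

lemma pbP_ge (g : Fin k → ℕ) {j : ℕ} (hj : k ≤ j) : pbP g j = ∑ c, g c := by
  unfold pbP
  congr 1
  ext c
  simp only [Finset.mem_filter, Finset.mem_univ, true_and]
  exact iff_of_true (lt_of_lt_of_le c.isLt hj) trivial

lemma pbP_col (f : Fin m → Finset (Fin k)) (j : ℕ) :
    pbP (pbcol f) j = ∑ t, ((f t).filter (fun c : Fin k => (c : ℕ) < j)).card := by
  unfold pbP
  simp_rw [pbcol_sum]
  rw [Finset.sum_comm]
  refine Finset.sum_congr rfl fun t _ => ?_
  rw [Finset.card_filter, ← Finset.sum_filter, Finset.filter_filter, ← Finset.sum_filter]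
  congr 1
  ext c
  simp only [Finset.mem_filter, Finset.mem_univ, true_and]
  exact and_comm

lemma pbP_col_le (f : Fin m → Finset (Fin k)) (j : ℕ) :
    pbP (pbcol f) j ≤ ∑ t, min ((f t).card) j := by
  rw [pbP_col]
  refine Finset.sum_le_sum fun t _ => le_min (Finset.card_le_card (Finset.filter_subset _ _)) ?_
  calc ((f t).filter (fun c : Fin k => (c : ℕ) < j)).card
      ≤ ((Finset.univ : Finset (Fin k)).filter fun c : Fin k => (c : ℕ) < j).card := by
        refine Finset.card_le_card fun c hc => ?_
        rw [Finset.mem_filter] at hc ⊢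
        exact ⟨Finset.mem_univ c, hc.2⟩
    _ ≤ j := filter_lt_card_le j

lemma ferrers (a : Fin m → ℕ) (ha : ∀ t, a t ≤ k) :
    ∃ f : Fin m → Finset (Fin k), (∀ t, (f t).card = a t) ∧
      ∀ j, pbP (pbcol f) j = ∑ t, min (a t) j := by
  refine ⟨fun t => Finset.univ.filter (fun c : Fin k => (c : ℕ) < a t),
    fun t => filter_lt_card _ (ha t), fun j => ?_⟩
  rw [pbP_col]
  refine Finset.sum_congr rfl fun t _ => ?_
  rw [Finset.filter_filter]
  have h1 : (Finset.univ.filter fun c : Fin k => (c : ℕ) < a t ∧ (c : ℕ) < j)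
      = Finset.univ.filter fun c : Fin k => (c : ℕ) < min (a t) j := by
    ext c
    simp only [Finset.mem_filter, Finset.mem_univ, true_and]
    omega
  rw [h1, filter_lt_card _ (le_trans (min_le_left _ _) (ha t))]

-- matrix to graph
def pbAdj (f : Fin m → Finset (Fin k)) : (Fin m ⊕ Fin k) → (Fin m ⊕ Fin k) → Bool
  | Sum.inl t, Sum.inr c => decide (c ∈ f t)
  | Sum.inr c, Sum.inl t => decide (c ∈ f t)
  | _, _ => false

lemma pbAdj_symm (f : Fin m → Finset (Fin k)) :
    ∀ x y, pbAdj f x y = pbAdj f y x := by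
  rintro (t | c) (t' | c') <;> rfl

lemma pbAdj_irrefl (f : Fin m → Finset (Fin k)) : ∀ x, pbAdj f x x = false := by
  rintro (t | c) <;> rfl

def pbGraph (f : Fin m → Finset (Fin k)) (e : Fin n ≃ (Fin m ⊕ Fin k)) :
    SimpleGraph (Fin n) where
  Adj u v := pbAdj f (e u) (e v) = true
  symm := ⟨fun u v h => by
    show pbAdj f (e v) (e u) = true
    rw [pbAdj_symm]
    exact h⟩
  loopless := ⟨fun u h => by
    have h' : pbAdj f (e u) (e u) = true := h
    rw [pbAdj_irrefl] at h'
    exact Bool.false_ne_true h'⟩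

instance pbGraphDec (f : Fin m → Finset (Fin k)) (e : Fin n ≃ (Fin m ⊕ Fin k)) :
    DecidableRel (pbGraph f e).Adj := fun u v => by
  unfold pbGraph
  infer_instance

lemma card_filter_sum_type (q : Fin m ⊕ Fin k → Prop) [DecidablePred q] :
    (Finset.univ.filter q).card
      = (Finset.univ.filter (fun t : Fin m => q (Sum.inl t))).card
        + (Finset.univ.filter (fun c : Fin k => q (Sum.inr c))).card := by
  rw [← Fintype.card_subtype, ← Fintype.card_subtype, ← Fintype.card_subtype,
    ← Fintype.card_sum]
  exact Fintype.card_congr Equiv.subtypeSum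

lemma pbGraph_degree (f : Fin m → Finset (Fin k)) (e : Fin n ≃ (Fin m ⊕ Fin k)) (u : Fin n) :
    (pbGraph f e).degree u = Sum.elim (fun t => (f t).card) (pbcol f) (e u) := by
  classical
  rw [← SimpleGraph.card_neighborFinset_eq_degree, SimpleGraph.neighborFinset_eq_filter]
  have h1 : (Finset.univ.filter ((pbGraph f e).Adj u)).card
      = (Finset.univ.filter (fun y : Fin m ⊕ Fin k => pbAdj f (e u) y = true)).card := by
    refine Finset.card_bij' (fun v _ => e v) (fun y _ => e.symm y) ?_ ?_ ?_ ?_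
    · intro v hv
      rw [Finset.mem_filter] at hv ⊢
      exact ⟨Finset.mem_univ _, hv.2⟩
    · intro y hy
      rw [Finset.mem_filter] at hy ⊢
      refine ⟨Finset.mem_univ _, ?_⟩
      show pbAdj f (e u) (e (e.symm y)) = true
      rw [e.apply_symm_apply]
      exact hy.2
    · intro v _; exact e.symm_apply_apply v
    · intro y _; exact e.apply_symm_apply y
  rw [h1, card_filter_sum_type]
  rcases he : e u with t | c
  · have h2 : (Finset.univ.filter (fun t' : Fin m => pbAdj f (Sum.inl t) (Sum.inl t') = true)) = ∅ := by
      apply Finset.filter_false_of_mem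
      intro t' _
      simp [pbAdj]
    have h3 : (Finset.univ.filter (fun c : Fin k => pbAdj f (Sum.inl t) (Sum.inr c) = true)) = f t := by
      ext c
      simp [pbAdj]
    rw [h2, h3]
    simp
  · have h2 : (Finset.univ.filter (fun t : Fin m => pbAdj f (Sum.inr c) (Sum.inl t) = true))
        = Finset.univ.filter (fun t => c ∈ f t) := by
      ext t
      simp [pbAdj]
    have h3 : (Finset.univ.filter (fun c' : Fin k => pbAdj f (Sum.inr c) (Sum.inr c') = true)) = ∅ := by
      apply Finset.filter_false_of_mem
      intro c' _
      simp [pbAdj]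
    rw [h2, h3]
    simp [pbcol]


lemma conj_sum_eq_min (m j : ℕ) (a : Fin m → ℕ) :
    ∑ i ∈ Finset.Icc 1 j, (Finset.univ.filter (fun t : Fin m => i ≤ a t)).card
      = ∑ t, min (a t) j := by
  have : ∀ i, (Finset.univ.filter (fun t : Fin m => i ≤ a t)).card
      = ∑ t, if i ≤ a t then 1 else 0 := fun i => by
    rw [Finset.card_filter]
  simp_rw [this]
  rw [Finset.sum_comm]
  refine Finset.sum_congr rfl fun t _ => ?_
  rw [Finset.sum_ite, Finset.sum_const, Finset.sum_const]
  have : Finset.filter (fun x => x ≤ a t) (Finset.Icc 1 j) = Finset.Icc 1 (min (a t) j) := by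
    ext x; simp [Finset.mem_Icc]; omega
  rw [this]
  simp [Nat.card_Icc]


lemma exists_equiv_of_multiset_map_eq :
    ∀ (N : ℕ) (α β : Type) [Fintype α] [Fintype β] [DecidableEq α] [DecidableEq β]
      (f : α → ℕ) (g : β → ℕ), Fintype.card α = N →
      Multiset.map f Finset.univ.val = Multiset.map g Finset.univ.val →
      ∃ e : α ≃ β, ∀ x, g (e x) = f x := by
  intro N
  induction N with
  | zero =>
    intro α β _ _ _ _ f g hcard h
    have hα : IsEmpty α := Fintype.card_eq_zero_iff.mp hcard
    have hβ : IsEmpty β := by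
      rw [← Fintype.card_eq_zero_iff, ← Finset.card_univ, Finset.card_def]
      have := congrArg Multiset.card h
      rw [Multiset.card_map, Multiset.card_map] at this
      rw [← this, ← Finset.card_def, Finset.card_univ, hcard]
    exact ⟨Equiv.equivOfIsEmpty α β, fun x => (hα.false x).elim⟩
  | succ N ih =>
    intro α β _ _ _ _ f g hcard h
    have : Nonempty α := Fintype.card_pos_iff.mp (by omega)
    obtain ⟨x⟩ := this
    have hmem : f x ∈ Multiset.map g Finset.univ.val := by
      rw [← h]; exact Multiset.mem_map_of_mem f (Finset.mem_univ_val x)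
    obtain ⟨y, _, hy⟩ := Multiset.mem_map.mp hmem
    have hx : (Finset.univ : Finset α).val = x ::ₘ (Finset.univ.erase x).val := by
      rw [Finset.erase_val]
      exact (Multiset.cons_erase (Finset.mem_univ_val x)).symm
    have hyv : (Finset.univ : Finset β).val = y ::ₘ (Finset.univ.erase y).val := by
      rw [Finset.erase_val]
      exact (Multiset.cons_erase (Finset.mem_univ_val y)).symm
    have h' : Multiset.map f (Finset.univ.erase x).val
        = Multiset.map g (Finset.univ.erase y).val := by
      have h2 := h
      rw [hx, hyv, Multiset.map_cons, Multiset.map_cons, hy] at h2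
      exact (Multiset.cons_inj_right _).mp h2
    set A := (Finset.univ : Finset α).erase x with hA
    set B := (Finset.univ : Finset β).erase y with hB
    have hcA : Fintype.card {z // z ∈ A} = N := by
      rw [Fintype.card_coe, Finset.card_erase_of_mem (Finset.mem_univ x),
        Finset.card_univ, hcard]
      omega
    have hmA : Multiset.map (fun z : {z // z ∈ A} => f z) Finset.univ.val
        = Multiset.map (fun w : {w // w ∈ B} => g w) Finset.univ.val := by
      rw [Finset.univ_eq_attach, Finset.univ_eq_attach, Finset.attach_val,
        Finset.attach_val]
      exact (Multiset.attach_map_val' A.val f).trans (h'.trans (Multiset.attach_map_val' B.val g).symm)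
    obtain ⟨e', he'⟩ := ih {z // z ∈ A} {w // w ∈ B} _ _ hcA hmA
    have hAmem : ∀ z : α, z ≠ x → z ∈ A := fun z hz => Finset.mem_erase.mpr ⟨hz, Finset.mem_univ z⟩
    have hBmem : ∀ w : β, w ≠ y → w ∈ B := fun w hw => Finset.mem_erase.mpr ⟨hw, Finset.mem_univ w⟩
    have he'ne : ∀ z, ((e' z : {w // w ∈ B}) : β) ≠ y := fun z => (Finset.mem_erase.mp (e' z).2).1
    have hsymne : ∀ w, ((e'.symm w : {z // z ∈ A}) : α) ≠ x := fun w => (Finset.mem_erase.mp (e'.symm w).2).1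
    refine ⟨⟨fun z => if h : z = x then y else (e' ⟨z, hAmem z h⟩ : β),
            fun w => if h : w = y then x else (e'.symm ⟨w, hBmem w h⟩ : α), ?_, ?_⟩, ?_⟩
    · intro z
      by_cases hz : z = x
      · simp [hz]
      · simp only [dif_neg hz, dif_neg (he'ne _), Subtype.coe_eta, Equiv.symm_apply_apply]
    · intro w
      by_cases hw : w = y
      · simp [hw]
      · simp only [dif_neg hw, dif_neg (hsymne _), Subtype.coe_eta, Equiv.apply_symm_apply]
    · intro z
      by_cases hz : z = x
      · subst hz; rw [Equiv.coe_fn_mk, dif_pos rfl, hy]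
      · simp only [Equiv.coe_fn_mk, dif_neg hz]
        exact he' _

lemma pbP_split (g : Fin k → ℕ) {j1 j2 : ℕ} (h : j1 ≤ j2) :
    pbP g j2 = pbP g j1 + ∑ c ∈ Finset.univ.filter (fun c : Fin k => j1 ≤ (c : ℕ) ∧ (c : ℕ) < j2), g c := by
  unfold pbP
  rw [← Finset.sum_union]
  · congr 1
    ext c
    simp only [Finset.mem_union, Finset.mem_filter, Finset.mem_univ, true_and]
    omega
  · rw [Finset.disjoint_filter]
    intro c _ hc hc2
    omega

lemma pbP_succ (g : Fin k → ℕ) (i : Fin k) :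
    pbP g ((i : ℕ) + 1) = pbP g (i : ℕ) + g i := by
  rw [pbP_split g (Nat.le_succ _)]
  congr 1
  have : Finset.univ.filter (fun c : Fin k => (i : ℕ) ≤ (c : ℕ) ∧ (c : ℕ) < (i : ℕ) + 1) = {i} := by
    ext c
    simp only [Finset.mem_filter, Finset.mem_univ, true_and, Finset.mem_singleton]
    constructor
    · intro hc; exact Fin.ext (by omega)
    · intro hc; subst hc; omega
  rw [this, Finset.sum_singleton]

lemma transfer_main (b : Fin k → ℕ) (hb : Antitone b) :
    ∀ (N : ℕ) (f : Fin m → Finset (Fin k)),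
      (∀ j : ℕ, pbP b j ≤ pbP (pbcol f) j) →
      (∑ c, b c = ∑ c, pbcol f c) →
      (∑ j ∈ Finset.range (k + 1), (pbP (pbcol f) j - pbP b j) = N) →
      ∃ f' : Fin m → Finset (Fin k), (∀ t, (f' t).card = (f t).card) ∧ (∀ c, pbcol f' c = b c) := by
  intro N
  induction N using Nat.strong_induction_on with
  | _ N ih =>
  intro f hinv htot hM
  by_cases hdone : ∀ c, pbcol f c = b c
  · exact ⟨f, fun t => rfl, hdone⟩
  push_neg at hdone
  -- i : minimal index with pbcol f ≠ b
  have hSne : (Finset.univ.filter (fun c : Fin k => pbcol f c ≠ b c)).Nonempty := by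
    obtain ⟨c, hc⟩ := hdone
    exact ⟨c, Finset.mem_filter.mpr ⟨Finset.mem_univ c, hc⟩⟩
  obtain ⟨i, himem, hile⟩ := Finset.exists_min_image _ id hSne
  have hine : pbcol f i ≠ b i := (Finset.mem_filter.mp himem).2
  have hmin_i : ∀ c : Fin k, c < i → pbcol f c = b c := by
    intro c hc
    by_contra hne
    exact absurd (hile c (Finset.mem_filter.mpr ⟨Finset.mem_univ c, hne⟩)) (not_le.mpr hc)
  -- prefix equality below i
  have hpre : pbP (pbcol f) (i : ℕ) = pbP b (i : ℕ) := by
    unfold pbP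
    refine Finset.sum_congr rfl fun c hc => ?_
    have : (c : ℕ) < (i : ℕ) := (Finset.mem_filter.mp hc).2
    exact hmin_i c (Fin.lt_def.mpr this)
  -- pbcol f i > b i
  have hgt : b i < pbcol f i := by
    have h1 := hinv ((i : ℕ) + 1)
    rw [pbP_succ, pbP_succ, hpre] at h1
    omega
  -- jj : minimal index with pbcol f < b
  have hTne : (Finset.univ.filter (fun c : Fin k => pbcol f c < b c)).Nonempty := by
    by_contra hT
    rw [Finset.not_nonempty_iff_eq_empty, Finset.filter_eq_empty_iff] at hT
    have hle : ∀ c ∈ (Finset.univ : Finset (Fin k)), b c ≤ pbcol f c := fun c _ =>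
      not_lt.mp (hT (Finset.mem_univ c))
    have := Finset.sum_lt_sum hle ⟨i, Finset.mem_univ i, hgt⟩
    omega
  obtain ⟨jj, hjmem, hjle⟩ := Finset.exists_min_image _ id hTne
  have hjlt : pbcol f jj < b jj := (Finset.mem_filter.mp hjmem).2
  have hmin_j : ∀ c : Fin k, c < jj → b c ≤ pbcol f c := by
    intro c hc
    by_contra hne
    exact absurd (hjle c (Finset.mem_filter.mpr ⟨Finset.mem_univ c, not_le.mp hne⟩))
      (not_le.mpr hc)
  have hij : i < jj := by
    have h1 : i ≤ jj := hile jj (Finset.mem_filter.mpr ⟨Finset.mem_univ jj, by omega⟩)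
    rcases lt_or_eq_of_le h1 with h | h
    · exact h
    · rw [h] at hgt; omega
  have hijne : i ≠ jj := ne_of_lt hij
  -- key claim : strict dominance in the middle
  have hclaim : ∀ j' : ℕ, (i : ℕ) < j' → j' ≤ (jj : ℕ) → pbP b j' + 1 ≤ pbP (pbcol f) j' := by
    intro j' h1 h2
    rw [pbP_split (pbcol f) (le_of_lt h1), pbP_split b (le_of_lt h1), hpre]
    have hmid : ∑ c ∈ Finset.univ.filter (fun c : Fin k => (i : ℕ) ≤ (c : ℕ) ∧ (c : ℕ) < j'), b c
        < ∑ c ∈ Finset.univ.filter (fun c : Fin k => (i : ℕ) ≤ (c : ℕ) ∧ (c : ℕ) < j'), pbcol f c := by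
      refine Finset.sum_lt_sum ?_ ⟨i, ?_, hgt⟩
      · intro c hc
        have hc' := (Finset.mem_filter.mp hc).2
        have : c < jj := Fin.lt_def.mpr (by omega)
        exact hmin_j c this
      · exact Finset.mem_filter.mpr ⟨Finset.mem_univ i, by omega⟩
    omega
  -- find a row t with i ∈ f t, jj ∉ f t
  have hrow : ∃ t, i ∈ f t ∧ jj ∉ f t := by
    have hcolgt : pbcol f jj < pbcol f i := by
      have : b jj ≤ b i := hb (le_of_lt hij)
      omega
    by_contra hno
    push_neg at hno
    have hsub : Finset.univ.filter (fun t => i ∈ f t) ⊆ Finset.univ.filter (fun t => jj ∈ f t) := by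
      intro t ht
      rw [Finset.mem_filter] at ht ⊢
      exact ⟨ht.1, hno t ht.2⟩
    have := Finset.card_le_card hsub
    rw [← pbcol, ← pbcol] at this
    omega
  obtain ⟨t, hti, htj⟩ := hrow
  set A := insert jj ((f t).erase i) with hA
  set f' := Function.update f t A with hf'
  have hf'app : ∀ t', f' t' = if t' = t then A else f t' := by
    intro t'
    by_cases h : t' = t <;> simp [hf', Function.update, h]
  -- row cards
  have hrows : ∀ t', (f' t').card = (f t').card := by
    intro t'
    rw [hf'app]
    by_cases h : t' = t
    · rw [if_pos h, h, hA, Finset.card_insert_of_notMem (fun hmem => htj (Finset.mem_of_mem_erase hmem)),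
        Finset.card_erase_of_mem hti]
      have : 0 < (f t).card := Finset.card_pos.mpr ⟨i, hti⟩
      omega
    · rw [if_neg h]
  -- column values
  have hmemA : ∀ c : Fin k, (c ∈ A ↔ (c = jj ∨ (c ≠ i ∧ c ∈ f t))) := by
    intro c
    rw [hA]
    simp only [Finset.mem_insert, Finset.mem_erase]
  have hpoint : ∀ c : Fin k, pbcol f' c + (if c = i then 1 else 0) = pbcol f c + (if c = jj then 1 else 0) := by
    intro c
    rw [pbcol_sum, pbcol_sum]
    have hsum : ∀ (g : Fin m → Finset (Fin k)), ∑ t', (if c ∈ g t' then 1 else 0)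
        = (if c ∈ g t then 1 else 0) + ∑ t' ∈ Finset.univ.erase t, (if c ∈ g t' then 1 else 0) := by
      intro g
      rw [← Finset.add_sum_erase _ _ (Finset.mem_univ t)]
    rw [hsum f', hsum f]
    have heq : ∑ t' ∈ Finset.univ.erase t, (if c ∈ f' t' then 1 else 0)
        = ∑ t' ∈ Finset.univ.erase t, (if c ∈ f t' then 1 else 0) := by
      refine Finset.sum_congr rfl fun t' ht' => ?_
      rw [hf'app, if_neg (Finset.mem_erase.mp ht').1]
    rw [heq]
    have hft : f' t = A := by rw [hf'app, if_pos rfl]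
    rw [hft]
    by_cases hci : c = i
    · subst hci
      rw [if_pos rfl, if_neg hijne, if_pos hti]
      have : c ∉ A := by
        rw [hmemA]
        push_neg
        exact ⟨hijne, fun h => absurd rfl h⟩
      rw [if_neg this]
      omega
    · rw [if_neg hci]
      by_cases hcj : c = jj
      · subst hcj
        rw [if_pos rfl, if_neg htj]
        have : c ∈ A := (hmemA c).mpr (Or.inl rfl)
        rw [if_pos this]
        omega
      · rw [if_neg hcj]
        have : c ∈ A ↔ c ∈ f t := by
          rw [hmemA]
          constructor
          · rintro (h | h)
            · exact absurd h hcj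
            · exact h.2
          · intro h; exact Or.inr ⟨hci, h⟩
        by_cases hcf : c ∈ f t
        · rw [if_pos hcf, if_pos (this.mpr hcf)]
        · rw [if_neg hcf, if_neg (fun h => hcf (this.mp h))]
  -- shift equation for sums
  have hshift : ∀ S : Finset (Fin k), (∑ c ∈ S, pbcol f' c) + (if i ∈ S then 1 else 0)
      = (∑ c ∈ S, pbcol f c) + (if jj ∈ S then 1 else 0) := by
    intro S
    have h1 : ∑ c ∈ S, (pbcol f' c + (if c = i then 1 else 0))
        = ∑ c ∈ S, (pbcol f c + (if c = jj then 1 else 0)) :=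
      Finset.sum_congr rfl fun c _ => hpoint c
    rw [Finset.sum_add_distrib, Finset.sum_add_distrib, Finset.sum_ite_eq' S i (fun _ => 1),
      Finset.sum_ite_eq' S jj (fun _ => 1)] at h1
    exact h1
  -- P relations
  have hPrel : ∀ j' : ℕ, pbP (pbcol f') j' + (if (i : ℕ) < j' then 1 else 0)
      = pbP (pbcol f) j' + (if (jj : ℕ) < j' then 1 else 0) := by
    intro j'
    have h := hshift (Finset.univ.filter (fun c : Fin k => (c : ℕ) < j'))
    simp only [Finset.mem_filter, Finset.mem_univ, true_and] at h
    unfold pbP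
    exact h
  have hij' : (i : ℕ) < (jj : ℕ) := Fin.lt_def.mp hij
  have hPle : ∀ j', pbP (pbcol f') j' ≤ pbP (pbcol f) j' := by
    intro j'
    have h := hPrel j'
    rcases lt_or_ge (i : ℕ) j' with h1 | h1
    · rcases lt_or_ge (jj : ℕ) j' with h2 | h2
      · rw [if_pos h1, if_pos h2] at h; omega
      · rw [if_pos h1, if_neg (by omega)] at h; omega
    · rw [if_neg (by omega), if_neg (by omega)] at h; omega
  have hinv' : ∀ j', pbP b j' ≤ pbP (pbcol f') j' := by
    intro j'
    have h := hPrel j'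
    have hd := hinv j'
    rcases lt_or_ge (i : ℕ) j' with h1 | h1
    · rcases lt_or_ge (jj : ℕ) j' with h2 | h2
      · rw [if_pos h1, if_pos h2] at h; omega
      · have hcl := hclaim j' h1 (by omega)
        rw [if_pos h1, if_neg (by omega)] at h; omega
    · rw [if_neg (by omega), if_neg (by omega)] at h; omega
  have htot' : ∑ c, b c = ∑ c, pbcol f' c := by
    have h := hshift Finset.univ
    rw [if_pos (Finset.mem_univ i), if_pos (Finset.mem_univ jj)] at h
    omega
  have hdec : ∑ j ∈ Finset.range (k + 1), (pbP (pbcol f') j - pbP b j) < N := by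
    rw [← hM]
    refine Finset.sum_lt_sum (fun j _ => Nat.sub_le_sub_right (hPle j) _)
      ⟨(i : ℕ) + 1, Finset.mem_range.mpr (by have := i.isLt; omega), ?_⟩
    have h := hPrel ((i : ℕ) + 1)
    rw [if_pos (by omega), if_neg (by omega)] at h
    have h1 := hinv' ((i : ℕ) + 1)
    omega
  obtain ⟨f'', hrows'', hcols''⟩ := ih _ hdec f' hinv' htot' rfl
  exact ⟨f'', fun t' => (hrows'' t').trans (hrows t'), hcols''⟩

lemma pb_backward (n : ℕ) (d : Fin n → ℕ)
    (m k : ℕ) (a : Fin m → ℕ) (b : Fin k → ℕ) (hb : Antitone b)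
    (hmult : Multiset.map a Finset.univ.val + Multiset.map b Finset.univ.val
      = Multiset.map d Finset.univ.val)
    (hsa : 2 * ∑ i, a i = ∑ i, d i) (hsb : 2 * ∑ i, b i = ∑ i, d i)
    (hdom : ∀ j : ℕ, ∑ i ∈ Finset.univ.filter (fun i : Fin k => (i : ℕ) < j), b i ≤
          ∑ i ∈ Finset.Icc 1 j, (Finset.univ.filter (fun t : Fin m => i ≤ a t)).card) :
    ∃ (G : SimpleGraph (Fin n)) (_ : DecidableRel G.Adj),
        (∀ i, G.degree i = d i) ∧
        ∃ C : Set (Fin n), ∀ ⦃u v⦄, G.Adj u v → (u ∈ C ↔ v ∉ C) := by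
  have hab : ∑ i, a i = ∑ i, b i := by omega
  have hdom' : ∀ j, pbP b j ≤ ∑ t, min (a t) j := by
    intro j
    have h := hdom j
    rwa [conj_sum_eq_min] at h
  have hak : ∀ t, a t ≤ k := by
    have h1 : ∑ t, a t ≤ ∑ t, min (a t) k := by
      have h := hdom' k
      rwa [pbP_ge b le_rfl, ← hab] at h
    have h2 : ∀ t ∈ Finset.univ, min (a t) k ≤ a t := fun t _ => min_le_left _ _
    have h3 : ∑ t, min (a t) k = ∑ t, a t := le_antisymm (Finset.sum_le_sum h2) h1
    intro t
    have h4 := (Finset.sum_eq_sum_iff_of_le h2).mp h3 t (Finset.mem_univ t)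
    omega
  obtain ⟨f0, hf0card, hf0P⟩ := ferrers a hak
  have hinv : ∀ j, pbP b j ≤ pbP (pbcol f0) j := fun j => by rw [hf0P]; exact hdom' j
  have htot : ∑ c, b c = ∑ c, pbcol f0 c := by
    have h1 : ∑ c, pbcol f0 c = pbP (pbcol f0) k := (pbP_ge _ le_rfl).symm
    have h2 : ∑ t, min (a t) k = ∑ t, a t :=
      Finset.sum_congr rfl fun t _ => min_eq_left (hak t)
    rw [h1, hf0P, h2, ← hab]
  obtain ⟨f, hfcard, hfcol⟩ := transfer_main b hb _ f0 hinv htot rfl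
  have hfcard' : ∀ t, (f t).card = a t := fun t => (hfcard t).trans (hf0card t)
  -- the index equivalence
  have hmult2 : Multiset.map d Finset.univ.val
      = Multiset.map (Sum.elim a b) (Finset.univ : Finset (Fin m ⊕ Fin k)).val := by
    rw [← hmult, ← Finset.univ_disjSum_univ, Finset.val_disjSum, Multiset.disjSum,
      Multiset.map_add, Multiset.map_map, Multiset.map_map]
    rfl
  obtain ⟨e, he⟩ := exists_equiv_of_multiset_map_eq n (Fin n) (Fin m ⊕ Fin k) d
    (Sum.elim a b) (Fintype.card_fin n) hmult2
  refine ⟨pbGraph f e, pbGraphDec f e, ?_, ?_⟩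
  · intro u
    rw [pbGraph_degree, ← he u]
    rcases hu : e u with t | c
    · simp only [Sum.elim_inl]
      exact hfcard' t
    · simp only [Sum.elim_inr]
      exact hfcol c
  · refine ⟨{u | (e u).isLeft = true}, ?_⟩
    intro u v hadj
    have hadj' : pbAdj f (e u) (e v) = true := hadj
    simp only [Set.mem_setOf_eq]
    rcases hu : e u with t | c <;> rcases hv : e v with t' | c' <;>
      rw [hu, hv] at hadj' <;> simp [pbAdj] at hadj' ⊢


lemma pb_sum_F_of_map_eq {α β : Type*} (s : Multiset α) (t : Multiset β)
    (f : α → ℕ) (g : β → ℕ) (h : s.map f = t.map g) (F : ℕ → ℕ) :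
    (s.map (fun x => F (f x))).sum = (t.map (fun y => F (g y))).sum := by
  have h1 : s.map (fun x => F (f x)) = (s.map f).map F := by
    rw [Multiset.map_map]; rfl
  have h2 : t.map (fun y => F (g y)) = (t.map g).map F := by
    rw [Multiset.map_map]; rfl
  rw [h1, h2, h]

lemma pb_enum_sorted {n : ℕ} (s : Finset (Fin n)) (d : Fin n → ℕ) :
    ∃ ψ : Fin s.card → Fin n, Function.Injective ψ ∧ (∀ i, ψ i ∈ s) ∧
      Antitone (fun i => d (ψ i)) ∧
      Multiset.map (fun i => d (ψ i)) Finset.univ.val = Multiset.map d s.val := by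
  classical
  set c := s.card with hc
  let e := s.orderIsoOfFin rfl
  let g0 : Fin c → ℕ := fun i => d (e i)
  let σ := Tuple.sort g0
  refine ⟨fun i => (e (σ i.rev) : Fin n), ?_, ?_, ?_, ?_⟩
  · intro i j hij
    have h1 : σ i.rev = σ j.rev := by
      apply e.injective
      exact Subtype.ext hij
    have := σ.injective h1
    exact Fin.rev_injective this
  · intro i
    exact (e (σ i.rev)).2
  · intro i j hij
    have hmono := Tuple.monotone_sort g0
    have : j.rev ≤ i.rev := Fin.rev_le_rev.mpr hij
    exact hmono this
  · have hστ : Multiset.map (fun i : Fin c => (σ i.rev)) Finset.univ.val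
        = Finset.univ.val := by
      have heq : (fun i : Fin c => σ i.rev) = ⇑(Fin.revPerm.trans σ) := rfl
      have h0 := congrArg Finset.val (Finset.map_univ_equiv (Fin.revPerm.trans σ))
      rw [Finset.map_val] at h0
      rw [heq]
      simpa using h0
    have h1 : Multiset.map (fun i : Fin c => d (e (σ i.rev))) Finset.univ.val
        = Multiset.map (fun i : Fin c => d (e i)) Finset.univ.val := by
      have : (fun i : Fin c => d ((e (σ i.rev)) : Fin n))
          = (fun i : Fin c => d ((e i : Fin n))) ∘ (fun i : Fin c => σ i.rev) := rfl
      rw [this, ← Multiset.map_map, hστ]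
    rw [h1]
    have h2 : Multiset.map (fun i : Fin c => ((e i : Fin n))) Finset.univ.val = s.val := by
      have h3 : Multiset.map (⇑e) Finset.univ.val
          = (Finset.univ : Finset {x // x ∈ s}).val := by
        have h0 := congrArg Finset.val (Finset.map_univ_equiv e.toEquiv)
        rw [Finset.map_val] at h0
        simpa using h0
      have : (fun i : Fin c => ((e i : Fin n)))
          = (Subtype.val : {x // x ∈ s} → Fin n) ∘ ⇑e := rfl
      rw [this, ← Multiset.map_map, h3, Finset.univ_eq_attach, Finset.attach_val,
        Multiset.attach_map_val]
    have : (fun i : Fin c => d ((e i : Fin n)))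
        = d ∘ (fun i : Fin c => ((e i : Fin n))) := rfl
    rw [this, ← Multiset.map_map, h2]

lemma pb_forward (n : ℕ) (d : Fin n → ℕ)
    (G : SimpleGraph (Fin n)) (inst : DecidableRel G.Adj) (hdeg : ∀ i, G.degree i = d i)
    (C : Set (Fin n)) (hC : ∀ ⦃u v⦄, G.Adj u v → (u ∈ C ↔ v ∉ C)) :
    ∃ (m k : ℕ) (a : Fin m → ℕ) (b : Fin k → ℕ),
        Antitone a ∧ Antitone b ∧
        Multiset.map a Finset.univ.val + Multiset.map b Finset.univ.val =
          Multiset.map d Finset.univ.val ∧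
        2 * ∑ i, a i = ∑ i, d i ∧ 2 * ∑ i, b i = ∑ i, d i ∧
        ∀ j : ℕ,
          ∑ i ∈ Finset.univ.filter (fun i : Fin k => (i : ℕ) < j), b i ≤
          ∑ i ∈ Finset.Icc 1 j, (Finset.univ.filter (fun t : Fin m => i ≤ a t)).card := by
  classical
  set Cf : Finset (Fin n) := Finset.univ.filter (fun u => u ∈ C) with hCf
  have hmemCf : ∀ u : Fin n, u ∈ Cf ↔ u ∈ C := fun u => by
    rw [hCf, Finset.mem_filter]
    simp
  have hmemKf : ∀ u : Fin n, u ∈ Cfᶜ ↔ u ∉ C := fun u => by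
    rw [Finset.mem_compl, hmemCf]
  obtain ⟨ψa, hψa_inj, hψa_mem, hψa_anti, hψa_mult⟩ := pb_enum_sorted Cf d
  obtain ⟨ψb, hψb_inj, hψb_mem, hψb_anti, hψb_mult⟩ := pb_enum_sorted Cfᶜ d
  refine ⟨Cf.card, Cfᶜ.card, fun i => d (ψa i), fun i => d (ψb i),
    hψa_anti, hψb_anti, ?_, ?_, ?_, ?_⟩
  -- degree sums restricted
  all_goals {
    have hval : Cf.val + Cfᶜ.val = Finset.univ.val := by
      have hsub : Cf.val ≤ (Finset.univ : Finset (Fin n)).val :=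
        Finset.val_le_iff.mpr (Finset.subset_univ Cf)
      have : Cfᶜ.val = (Finset.univ : Finset (Fin n)).val - Cf.val := by
        rw [Finset.compl_eq_univ_sdiff, Finset.sdiff_val]
      rw [this, add_tsub_cancel_of_le hsub]
    have hdeg_sum : ∀ u, G.degree u = ∑ v, (if G.Adj u v then 1 else 0) := by
      intro u
      rw [← SimpleGraph.card_neighborFinset_eq_degree, SimpleGraph.neighborFinset_eq_filter,
        Finset.card_filter]
    have hCK : ∀ u ∈ Cf, ∀ v ∈ Cf, ¬ G.Adj u v := by
      intro u hu v hv hadj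
      exact ((hC hadj).mp ((hmemCf u).mp hu)) ((hmemCf v).mp hv)
    have hKK : ∀ u ∈ Cfᶜ, ∀ v ∈ Cfᶜ, ¬ G.Adj u v := by
      intro u hu v hv hadj
      exact ((hmemKf u).mp hu) (((hC hadj).mpr ((hmemKf v).mp hv)))
    have hrestrC : ∀ u ∈ Cf, G.degree u = ∑ v ∈ Cfᶜ, (if G.Adj u v then 1 else 0) := by
      intro u hu
      rw [hdeg_sum u, ← Finset.sum_add_sum_compl Cf (fun v => if G.Adj u v then 1 else 0)]
      have hz : ∑ v ∈ Cf, (if G.Adj u v then 1 else 0) = 0 := by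
        refine Finset.sum_eq_zero fun v hv => ?_
        rw [if_neg (hCK u hu v hv)]
      omega
    have hrestrK : ∀ v ∈ Cfᶜ, G.degree v = ∑ u ∈ Cf, (if G.Adj v u then 1 else 0) := by
      intro v hv
      rw [hdeg_sum v, ← Finset.sum_add_sum_compl Cf (fun u => if G.Adj v u then 1 else 0)]
      have hz : ∑ u ∈ Cfᶜ, (if G.Adj v u then 1 else 0) = 0 := by
        refine Finset.sum_eq_zero fun u hu => ?_
        rw [if_neg (hKK v hv u hu)]
      omega
    have hsum_eq : ∑ u ∈ Cf, d u = ∑ v ∈ Cfᶜ, d v := by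
      calc ∑ u ∈ Cf, d u = ∑ u ∈ Cf, ∑ v ∈ Cfᶜ, (if G.Adj u v then 1 else 0) := by
            refine Finset.sum_congr rfl fun u hu => ?_
            rw [← hdeg u, hrestrC u hu]
        _ = ∑ v ∈ Cfᶜ, ∑ u ∈ Cf, (if G.Adj v u then 1 else 0) := by
            rw [Finset.sum_comm]
            refine Finset.sum_congr rfl fun v hv => Finset.sum_congr rfl fun u hu => ?_
            congr 1
            · simp [G.adj_comm]
        _ = ∑ v ∈ Cfᶜ, d v := by
            refine Finset.sum_congr rfl fun v hv => ?_
            rw [← hdeg v, hrestrK v hv]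
    have hsum_a : ∑ i, d (ψa i) = ∑ u ∈ Cf, d u := by
      have := congrArg Multiset.sum hψa_mult
      rwa [Finset.sum, Finset.sum]
    have hsum_b : ∑ i, d (ψb i) = ∑ v ∈ Cfᶜ, d v := by
      have := congrArg Multiset.sum hψb_mult
      rwa [Finset.sum, Finset.sum]
    have hsum_univ : ∑ u ∈ Cf, d u + ∑ v ∈ Cfᶜ, d v = ∑ i, d i :=
      Finset.sum_add_sum_compl Cf d
    first
    | -- multiset equality
      (rw [hψa_mult, hψb_mult, ← Multiset.map_add, hval])
    | -- sum a
      (rw [hsum_a]; omega)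
    | -- sum b
      (rw [hsum_b]; omega)
    | -- dominance
      (intro j
       rw [conj_sum_eq_min _ j]
       -- RHS as sum over Cf
       have hRHS : ∑ t, min (d (ψa t)) j = ∑ u ∈ Cf, min (d u) j := by
         have := pb_sum_F_of_map_eq _ _ _ _ hψa_mult (fun x => min x j)
         rwa [Finset.sum, Finset.sum]
       rw [hRHS]
       set Bj := (Finset.univ.filter (fun i : Fin (Cfᶜ.card) => (i : ℕ) < j)).image ψb with hBj
       have hBj_sub : Bj ⊆ Cfᶜ := by
         intro v hv
         rw [hBj, Finset.mem_image] at hv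
         obtain ⟨i, _, hi⟩ := hv
         rw [← hi]
         exact hψb_mem i
       have hBj_card : Bj.card ≤ j := by
         rw [hBj, Finset.card_image_of_injective _ hψb_inj]
         exact filter_lt_card_le j
       have hLHS : ∑ i ∈ Finset.univ.filter (fun i : Fin (Cfᶜ.card) => (i : ℕ) < j), d (ψb i)
           = ∑ v ∈ Bj, d v := by
         rw [hBj, Finset.sum_image (fun x _ y _ h => hψb_inj h)]
       rw [hLHS]
       calc ∑ v ∈ Bj, d v = ∑ v ∈ Bj, ∑ u ∈ Cf, (if G.Adj v u then 1 else 0) := by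
             refine Finset.sum_congr rfl fun v hv => ?_
             rw [← hdeg v, hrestrK v (hBj_sub hv)]
         _ = ∑ u ∈ Cf, ∑ v ∈ Bj, (if G.Adj v u then 1 else 0) := Finset.sum_comm
         _ ≤ ∑ u ∈ Cf, min (d u) j := by
             refine Finset.sum_le_sum fun u hu => ?_
             rw [← Finset.card_filter]
             refine le_min ?_ ?_
             · rw [← hdeg u, ← SimpleGraph.card_neighborFinset_eq_degree,
                 SimpleGraph.neighborFinset_eq_filter]
               refine Finset.card_le_card fun v hv => ?_
               rw [Finset.mem_filter] at hv ⊢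
               refine ⟨Finset.mem_univ _, ?_⟩
               rw [G.adj_comm]
               exact hv.2
             · exact le_trans (Finset.card_le_card (Finset.filter_subset _ _)) hBj_card)
  }


/-- A graphical degree sequence `d = (d_1 ≥ ⋯ ≥ d_n)` is potentially bipartite
(has a bipartite realization) if and only if the terms of `d` can be
partitioned into two nonincreasing sequences `a` and `b` of equal weights
`|a| = |b| = |d| / 2` such that the conjugate of `a` dominates `b`. -/
theorem potentially_bipartite_iff (n : ℕ) (d : Fin n → ℕ) (hd : Antitone d)
    (hgr : ∃ (G : SimpleGraph (Fin n)) (_ : DecidableRel G.Adj), ∀ i, G.degree i = d i) :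
    (∃ (G : SimpleGraph (Fin n)) (_ : DecidableRel G.Adj),
        (∀ i, G.degree i = d i) ∧
        ∃ C : Set (Fin n), ∀ ⦃u v⦄, G.Adj u v → (u ∈ C ↔ v ∉ C)) ↔
    (∃ (m k : ℕ) (a : Fin m → ℕ) (b : Fin k → ℕ),
        Antitone a ∧ Antitone b ∧
        Multiset.map a Finset.univ.val + Multiset.map b Finset.univ.val =
          Multiset.map d Finset.univ.val ∧
        2 * ∑ i, a i = ∑ i, d i ∧ 2 * ∑ i, b i = ∑ i, d i ∧
        ∀ j : ℕ,
          ∑ i ∈ Finset.univ.filter (fun i : Fin k => (i : ℕ) < j), b i ≤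
          ∑ i ∈ Finset.Icc 1 j, (Finset.univ.filter (fun t : Fin m => i ≤ a t)).card) := by
  constructor
  · rintro ⟨G, inst, hdeg, C, hC⟩
    exact pb_forward n d G inst hdeg C hC
  · rintro ⟨m, k, a, b, ha, hb, hmult, hsa, hsb, hdom⟩
    exact pb_backward n d m k a b hb hmult hsa hsb hdom
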